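/- Let N, M ≥ 1 and let 𝒬 ⊆ ℝ^{N×M} be a nonempty compact convex set, each element of which is row-stochastic with strictly positive entries and weakly symmetric (every row of Q is a permutation of its first row, and all column sums of Q are equal). Then the upper bound on the robust capacity is tight: sup_{p ∈ Δ_N} inf_{Q ∈ 𝒬} I(p,Q) = inf_{Q ∈ 𝒬} [ log N + Σ_{m=1}^M Q_{1m} log( Q_{1m} / Σ_{l=1}^N Q_{lm} ) ]. -/

import Mathlib

open Real

/-- Average mutual information `I(p,Q)`. -/
noncomputable def AMI {N M : ℕ} (p : Fin N → ℝ) (Q : Fin N → Fin M → ℝ) : ℝ :=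
  ∑ n, ∑ m, p n * Q n m * Real.log (Q n m / ∑ l, p l * Q l m)

/-- `Q` is row-stochastic with strictly positive entries. -/
def rowStochPos {N M : ℕ} (Q : Fin N → Fin M → ℝ) : Prop :=
  (∀ n m, 0 < Q n m) ∧ ∀ n, ∑ m, Q n m = 1

/-- A weakly symmetric channel: every row is a permutation of the first row,
and all column sums are equal. -/
def weaklySymmetric {N M : ℕ} (hN : 0 < N) (Q : Fin N → Fin M → ℝ) : Prop :=
  (∀ n : Fin N, ∃ σ : Equiv.Perm (Fin M), ∀ m, Q n m = Q ⟨0, hN⟩ (σ m)) ∧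
  (∀ m m' : Fin M, ∑ l, Q l m = ∑ l, Q l m')

/-- Robust channel capacity `sup_{p ∈ Δ_N} inf_{Q ∈ 𝒬} I(p,Q)`. -/
noncomputable def robustCap {N M : ℕ} (𝒬 : Set (Fin N → Fin M → ℝ)) : ℝ :=
  sSup { x | ∃ p ∈ stdSimplex ℝ (Fin N), x = sInf { y | ∃ Q ∈ 𝒬, y = AMI p Q } }

/- ### Auxiliary lemmas -/

/-- The output distribution is positive. -/
lemma qout_pos {N M : ℕ} (p : Fin N → ℝ) (hp : p ∈ stdSimplex ℝ (Fin N))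
    (Q : Fin N → Fin M → ℝ) (hQ : rowStochPos Q) (m : Fin M) :
    0 < ∑ l, p l * Q l m := by
  have h1 : ∑ l, p l = 1 := hp.2
  have hex : ∃ l : Fin N, 0 < p l := by
    by_contra h
    push_neg at h
    have h0 : ∑ l, p l = 0 :=
      Finset.sum_eq_zero (fun l _ => le_antisymm (h l) (hp.1 l))
    rw [h0] at h1; exact zero_ne_one h1
  obtain ⟨l, hl⟩ := hex
  exact Finset.sum_pos' (fun i _ => mul_nonneg (hp.1 i) (hQ.1 i m).le)
    ⟨l, Finset.mem_univ l, mul_pos hl (hQ.1 l m)⟩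

/-- The output distribution sums to one. -/
lemma qout_sum {N M : ℕ} (p : Fin N → ℝ) (hp : p ∈ stdSimplex ℝ (Fin N))
    (Q : Fin N → Fin M → ℝ) (hQ : rowStochPos Q) :
    ∑ m, ∑ l, p l * Q l m = 1 := by
  rw [Finset.sum_comm]
  have : ∀ l : Fin N, ∑ m, p l * Q l m = p l := by
    intro l
    rw [← Finset.mul_sum, hQ.2 l, mul_one]
  simp_rw [this]
  exact hp.2

/-- Decomposition of mutual information. -/
lemma AMI_decomp {N M : ℕ} (p : Fin N → ℝ) (hp : p ∈ stdSimplex ℝ (Fin N))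
    (Q : Fin N → Fin M → ℝ) (hQ : rowStochPos Q) :
    AMI p Q = (∑ n, p n * ∑ m, Q n m * Real.log (Q n m))
      - ∑ m, (∑ l, p l * Q l m) * Real.log (∑ l, p l * Q l m) := by
  unfold AMI
  have key : ∀ n m, p n * Q n m * Real.log (Q n m / ∑ l, p l * Q l m)
      = p n * (Q n m * Real.log (Q n m))
        - p n * Q n m * Real.log (∑ l, p l * Q l m) := by
    intro n m
    rw [Real.log_div (ne_of_gt (hQ.1 n m)) (ne_of_gt (qout_pos p hp Q hQ m))]
    ring
  simp_rw [key, Finset.sum_sub_distrib]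
  congr 1
  · exact Finset.sum_congr rfl (fun n _ => (Finset.mul_sum _ _ _).symm)
  · rw [Finset.sum_comm]
    exact Finset.sum_congr rfl (fun m _ => by rw [← Finset.sum_mul])

/-- Gibbs inequality specialized to the uniform distribution: lower bound on
`∑ q log q`. -/
lemma neg_entropy_ge {M : ℕ} (hM : 0 < M) (q : Fin M → ℝ) (hq : ∀ m, 0 < q m)
    (hsum : ∑ m, q m = 1) :
    Real.log ((M : ℝ)⁻¹) ≤ ∑ m, q m * Real.log (q m) := by
  have hM' : (0:ℝ) < M := Nat.cast_pos.mpr hM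
  have h : ∀ m, q m * (Real.log ((M:ℝ)⁻¹) - Real.log (q m)) ≤ (M:ℝ)⁻¹ - q m := by
    intro m
    have h1 : Real.log ((M:ℝ)⁻¹ / q m) ≤ (M:ℝ)⁻¹ / q m - 1 :=
      Real.log_le_sub_one_of_pos (div_pos (inv_pos.mpr hM') (hq m))
    rw [Real.log_div (by positivity) (ne_of_gt (hq m))] at h1
    calc q m * (Real.log ((M:ℝ)⁻¹) - Real.log (q m))
        ≤ q m * ((M:ℝ)⁻¹ / q m - 1) := mul_le_mul_of_nonneg_left h1 (hq m).le
      _ = (M:ℝ)⁻¹ - q m := by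
          rw [mul_sub, mul_one, mul_comm, div_mul_cancel₀ _ (ne_of_gt (hq m))]
  have hsum2 : ∑ m, q m * (Real.log ((M:ℝ)⁻¹) - Real.log (q m)) ≤ 0 := by
    calc ∑ m, q m * (Real.log ((M:ℝ)⁻¹) - Real.log (q m))
        ≤ ∑ m : Fin M, ((M:ℝ)⁻¹ - q m) := Finset.sum_le_sum (fun m _ => h m)
      _ = (M : ℝ) * (M:ℝ)⁻¹ - 1 := by
          rw [Finset.sum_sub_distrib, hsum, Finset.sum_const, Finset.card_univ,
            Fintype.card_fin, nsmul_eq_mul]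
      _ = 0 := by field_simp; ring
  have heq : ∑ m, q m * (Real.log ((M:ℝ)⁻¹) - Real.log (q m))
      = Real.log ((M:ℝ)⁻¹) - ∑ m, q m * Real.log (q m) := by
    simp_rw [mul_sub]
    rw [Finset.sum_sub_distrib, ← Finset.sum_mul, hsum, one_mul]
  linarith [heq ▸ hsum2]

/-- For a weakly symmetric channel, the uniform input yields the uniform output. -/
lemma uniform_output {N M : ℕ} (hN : 0 < N) (hM : 0 < M)
    (Q : Fin N → Fin M → ℝ) (hQ : rowStochPos Q)
    (hs : ∀ m m' : Fin M, ∑ l, Q l m = ∑ l, Q l m') (m : Fin M) :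
    ∑ l, Q l m = (N : ℝ) / M := by
  have hM' : (0:ℝ) < M := Nat.cast_pos.mpr hM
  have hcol : ∑ m' : Fin M, ∑ l, Q l m' = (N : ℝ) := by
    rw [Finset.sum_comm]
    simp_rw [hQ.2]
    simp
  have h2 : (M:ℝ) * ∑ l, Q l m = (N : ℝ) := by
    rw [← hcol]
    rw [Finset.sum_congr rfl (fun m' _ => hs m' m)]
    rw [Finset.sum_const, Finset.card_univ, Fintype.card_fin, nsmul_eq_mul]
  field_simp
  linarith [h2]

/-- Sums of functions of row values are row-independent for weakly symmetric channels. -/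
lemma row_perm_sum {N M : ℕ} (hN : 0 < N) (Q : Fin N → Fin M → ℝ)
    (hrow : ∀ n : Fin N, ∃ σ : Equiv.Perm (Fin M), ∀ m, Q n m = Q ⟨0, hN⟩ (σ m))
    (g : ℝ → ℝ) (n : Fin N) :
    ∑ m, g (Q n m) = ∑ m, g (Q ⟨0, hN⟩ m) := by
  obtain ⟨σ, hσ⟩ := hrow n
  simp_rw [hσ]
  exact Equiv.sum_comp σ (fun m => g (Q ⟨0, hN⟩ m))

/-- Mutual information is nonnegative. -/
lemma AMI_nonneg {N M : ℕ} (p : Fin N → ℝ) (hp : p ∈ stdSimplex ℝ (Fin N))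
    (Q : Fin N → Fin M → ℝ) (hQ : rowStochPos Q) :
    0 ≤ AMI p Q := by
  unfold AMI
  have key : ∀ n m, p n * Q n m - p n * (∑ l, p l * Q l m)
      ≤ p n * Q n m * Real.log (Q n m / ∑ l, p l * Q l m) := by
    intro n m
    set qm := ∑ l, p l * Q l m with hqm
    have hqmp : 0 < qm := qout_pos p hp Q hQ m
    have h1 : Real.log (qm / Q n m) ≤ qm / Q n m - 1 :=
      Real.log_le_sub_one_of_pos (div_pos hqmp (hQ.1 n m))
    have h3 : Real.log (Q n m / qm) = - Real.log (qm / Q n m) := by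
      rw [← Real.log_inv, inv_div]
    have h2 : 1 - qm / Q n m ≤ Real.log (Q n m / qm) := by
      rw [h3]; linarith
    calc p n * Q n m - p n * qm
        = p n * Q n m * (1 - qm / Q n m) := by
          have hne : Q n m ≠ 0 := ne_of_gt (hQ.1 n m)
          field_simp
      _ ≤ p n * Q n m * Real.log (Q n m / qm) :=
          mul_le_mul_of_nonneg_left h2
            (mul_nonneg (hp.1 n) (hQ.1 n m).le)
  have hsum : ∑ n, ∑ m, (p n * Q n m - p n * (∑ l, p l * Q l m)) = 0 := by
    simp_rw [Finset.sum_sub_distrib]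
    have e1 : ∑ n, ∑ m, p n * Q n m = 1 := by
      have : ∀ n : Fin N, ∑ m, p n * Q n m = p n := by
        intro n; rw [← Finset.mul_sum, hQ.2 n, mul_one]
      simp_rw [this]; exact hp.2
    have e2 : ∑ n, ∑ m, p n * (∑ l, p l * Q l m) = 1 := by
      have : ∀ n : Fin N, ∑ m, p n * (∑ l, p l * Q l m)
          = p n * ∑ m, ∑ l, p l * Q l m := fun n => (Finset.mul_sum _ _ _).symm
      simp_rw [this, qout_sum p hp Q hQ, mul_one]
      exact hp.2
    rw [e1, e2]
    simp
  calc (0:ℝ) = ∑ n, ∑ m, (p n * Q n m - p n * (∑ l, p l * Q l m)) := hsum.symm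
    _ ≤ ∑ n, ∑ m, p n * Q n m * Real.log (Q n m / ∑ l, p l * Q l m) :=
        Finset.sum_le_sum (fun n _ => Finset.sum_le_sum (fun m _ => key n m))

/-- The uniform distribution lies in the standard simplex. -/
lemma uniform_mem_simplex {N : ℕ} (hN : 0 < N) :
    (fun _ : Fin N => (N : ℝ)⁻¹) ∈ stdSimplex ℝ (Fin N) := by
  have hN' : (0:ℝ) < N := Nat.cast_pos.mpr hN
  refine ⟨fun i => by positivity, ?_⟩
  rw [Finset.sum_const, Finset.card_univ, Fintype.card_fin, nsmul_eq_mul]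
  field_simp

/-- Value of mutual information at the uniform input for weakly symmetric channels. -/
lemma AMI_uniform {N M : ℕ} (hN : 0 < N) (hM : 0 < M)
    (Q : Fin N → Fin M → ℝ) (hQ : rowStochPos Q) (hsym : weaklySymmetric hN Q) :
    AMI (fun _ : Fin N => (N : ℝ)⁻¹) Q
      = (∑ m, Q ⟨0, hN⟩ m * Real.log (Q ⟨0, hN⟩ m)) + Real.log M := by
  have hN' : (0:ℝ) < N := Nat.cast_pos.mpr hN
  have hM' : (0:ℝ) < M := Nat.cast_pos.mpr hM
  set u : Fin N → ℝ := fun _ => (N : ℝ)⁻¹ with hu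
  have hus := uniform_mem_simplex (N := N) hN
  have hout : ∀ m : Fin M, ∑ l, u l * Q l m = (M:ℝ)⁻¹ := by
    intro m
    have : ∑ l, u l * Q l m = (N:ℝ)⁻¹ * ∑ l, Q l m := by
      rw [Finset.mul_sum]
    rw [this, uniform_output hN hM Q hQ hsym.2 m]
    field_simp
  rw [AMI_decomp u hus Q hQ]
  have e1 : ∑ n, u n * ∑ m, Q n m * Real.log (Q n m)
      = ∑ m, Q ⟨0, hN⟩ m * Real.log (Q ⟨0, hN⟩ m) := by
    have : ∀ n : Fin N, ∑ m, Q n m * Real.log (Q n m)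
        = ∑ m, Q ⟨0, hN⟩ m * Real.log (Q ⟨0, hN⟩ m) :=
      row_perm_sum hN Q hsym.1 (fun x => x * Real.log x)
    simp_rw [this, ← Finset.sum_mul]
    rw [hus.2, one_mul]
  have e2 : ∑ m : Fin M, (∑ l, u l * Q l m) * Real.log (∑ l, u l * Q l m)
      = - Real.log M := by
    simp_rw [hout]
    rw [Finset.sum_const, Finset.card_univ, Fintype.card_fin, nsmul_eq_mul,
      Real.log_inv]
    field_simp
  rw [e1, e2]
  ring

/-- The key inequality: the uniform input maximizes mutual information for
weakly symmetric channels. -/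
lemma AMI_le_AMI_uniform {N M : ℕ} (hN : 0 < N) (hM : 0 < M)
    (p : Fin N → ℝ) (hp : p ∈ stdSimplex ℝ (Fin N))
    (Q : Fin N → Fin M → ℝ) (hQ : rowStochPos Q) (hsym : weaklySymmetric hN Q) :
    AMI p Q ≤ AMI (fun _ : Fin N => (N : ℝ)⁻¹) Q := by
  rw [AMI_uniform hN hM Q hQ hsym, AMI_decomp p hp Q hQ]
  have e1 : ∑ n, p n * ∑ m, Q n m * Real.log (Q n m)
      = ∑ m, Q ⟨0, hN⟩ m * Real.log (Q ⟨0, hN⟩ m) := by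
    have : ∀ n : Fin N, ∑ m, Q n m * Real.log (Q n m)
        = ∑ m, Q ⟨0, hN⟩ m * Real.log (Q ⟨0, hN⟩ m) :=
      row_perm_sum hN Q hsym.1 (fun x => x * Real.log x)
    simp_rw [this, ← Finset.sum_mul]
    rw [hp.2, one_mul]
  rw [e1]
  have hge : Real.log ((M : ℝ)⁻¹)
      ≤ ∑ m, (∑ l, p l * Q l m) * Real.log (∑ l, p l * Q l m) :=
    neg_entropy_ge hM _ (fun m => qout_pos p hp Q hQ m) (qout_sum p hp Q hQ)
  rw [Real.log_inv] at hge
  linarith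

theorem robust_capacity_weakly_symmetric_tight
    {N M : ℕ} (hN : 0 < N) (hM : 0 < M)
    (𝒬 : Set (Fin N → Fin M → ℝ))
    (hne : 𝒬.Nonempty) (hcomp : IsCompact 𝒬) (hconv : Convex ℝ 𝒬)
    (hQ : ∀ Q ∈ 𝒬, rowStochPos Q)
    (hsym : ∀ Q ∈ 𝒬, weaklySymmetric hN Q) :
    robustCap 𝒬 =
      sInf { x | ∃ Q ∈ 𝒬,
        x = Real.log N +
          ∑ m, Q ⟨0, hN⟩ m * Real.log (Q ⟨0, hN⟩ m / ∑ l, Q l m) } := by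
  have hN' : (0:ℝ) < N := Nat.cast_pos.mpr hN
  have hM' : (0:ℝ) < M := Nat.cast_pos.mpr hM
  set u : Fin N → ℝ := fun _ => (N : ℝ)⁻¹ with hu
  have hus := uniform_mem_simplex (N := N) hN
  -- The RHS expression coincides with AMI u Q
  have hexpr : ∀ Q ∈ 𝒬,
      Real.log N + ∑ m, Q ⟨0, hN⟩ m * Real.log (Q ⟨0, hN⟩ m / ∑ l, Q l m)
        = AMI u Q := by
    intro Q hQ'
    rw [AMI_uniform hN hM Q (hQ Q hQ') (hsym Q hQ')]
    have hc : ∀ m : Fin M, (∑ l, Q l m) = (N:ℝ)/M :=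
      uniform_output hN hM Q (hQ Q hQ') (hsym Q hQ').2
    have : ∀ m : Fin M, Q ⟨0, hN⟩ m * Real.log (Q ⟨0, hN⟩ m / ∑ l, Q l m)
        = Q ⟨0, hN⟩ m * Real.log (Q ⟨0, hN⟩ m)
          - Q ⟨0, hN⟩ m * (Real.log N - Real.log M) := by
      intro m
      rw [hc m, Real.log_div (ne_of_gt ((hQ Q hQ').1 _ m)) (by positivity),
        Real.log_div (ne_of_gt hN') (ne_of_gt hM')]
      ring
    simp_rw [this, Finset.sum_sub_distrib, ← Finset.sum_mul, (hQ Q hQ').2]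
    ring
  have hsetRW : { x | ∃ Q ∈ 𝒬,
      x = Real.log N + ∑ m, Q ⟨0, hN⟩ m * Real.log (Q ⟨0, hN⟩ m / ∑ l, Q l m) }
      = { y | ∃ Q ∈ 𝒬, y = AMI u Q } := by
    ext x
    constructor
    · rintro ⟨Q, hQ', rfl⟩; exact ⟨Q, hQ', hexpr Q hQ'⟩
    · rintro ⟨Q, hQ', rfl⟩; exact ⟨Q, hQ', (hexpr Q hQ').symm⟩
  rw [hsetRW]
  -- Now prove sSup {f p} = f u where f p = sInf {AMI p Q}
  have hbdd : ∀ p ∈ stdSimplex ℝ (Fin N), BddBelow { y | ∃ Q ∈ 𝒬, y = AMI p Q } := by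
    intro p hp
    refine ⟨0, ?_⟩
    rintro y ⟨Q, hQ', rfl⟩
    exact AMI_nonneg p hp Q (hQ Q hQ')
  have hBne : { y | ∃ Q ∈ 𝒬, y = AMI u Q }.Nonempty := by
    obtain ⟨Q, hQ'⟩ := hne
    exact ⟨AMI u Q, Q, hQ', rfl⟩
  have hkey : ∀ p ∈ stdSimplex ℝ (Fin N),
      sInf { y | ∃ Q ∈ 𝒬, y = AMI p Q } ≤ sInf { y | ∃ Q ∈ 𝒬, y = AMI u Q } := by
    intro p hp
    refine le_csInf hBne ?_
    rintro y ⟨Q, hQ', rfl⟩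
    calc sInf { y | ∃ Q ∈ 𝒬, y = AMI p Q }
        ≤ AMI p Q := csInf_le (hbdd p hp) ⟨Q, hQ', rfl⟩
      _ ≤ AMI u Q := AMI_le_AMI_uniform hN hM p hp Q (hQ Q hQ') (hsym Q hQ')
  have hmem : sInf { y | ∃ Q ∈ 𝒬, y = AMI u Q }
      ∈ { x | ∃ p ∈ stdSimplex ℝ (Fin N), x = sInf { y | ∃ Q ∈ 𝒬, y = AMI p Q } } :=
    ⟨u, hus, rfl⟩
  have hub : ∀ x ∈ { x | ∃ p ∈ stdSimplex ℝ (Fin N),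
      x = sInf { y | ∃ Q ∈ 𝒬, y = AMI p Q } },
      x ≤ sInf { y | ∃ Q ∈ 𝒬, y = AMI u Q } := by
    rintro x ⟨p, hp, rfl⟩
    exact hkey p hp
  unfold robustCap
  exact le_antisymm (csSup_le ⟨_, hmem⟩ hub)
    (le_csSup ⟨_, hub⟩ hmem)
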